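/- Let n ≥ 1 be a natural number. Then v(f_n) and its derivative v(f_n)' are positive and monotone increasing on (0,∞), and the second derivative v(f_n)'' is nonnegative on (0,∞). -/

import Mathlib

/-- v h = (deriv h)^2 - (second derivative of h) * h. -/
noncomputable def v (f : ℝ → ℝ) (x : ℝ) : ℝ := (deriv f x) ^ 2 - deriv^[2] f x * f x

/-- `fn n x = √(π/2)·x^(n+1/2)·J_(n+1/2)(x)`, via the equivalent recursive definition
`fn 0 = sin`, `fn (n+1) x = ∫_0^x t·fn n t dt`. -/
noncomputable def fn : ℕ → ℝ → ℝ
  | 0 => fun x => Real.sin x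
  | n + 1 => fun x => ∫ t in (0:ℝ)..x, t * fn n t

lemma fn_contDiff (n : ℕ) : ContDiff ℝ ((⊤:ℕ∞):WithTop ℕ∞) (fn n) := by
  induction n with
  | zero => exact Real.contDiff_sin
  | succ n ih =>
    rw [contDiff_infty_iff_deriv]
    have hc : Continuous (fun t : ℝ => t * fn n t) := continuous_id.mul ih.continuous
    have hd : deriv (fn (n+1)) = fun x => x * fn n x := by
      funext x
      show deriv (fun u => ∫ t in (0:ℝ)..u, t * fn n t) x = x * fn n x
      exact hc.deriv_integral _ 0 x
    refine ⟨fun x => ?_, ?_⟩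
    · exact ⟨_, ((hc.integral_hasStrictDerivAt 0 x).hasDerivAt).hasFDerivAt⟩
    · rw [hd]; exact contDiff_id.mul ih

lemma fn_deriv (n : ℕ) : deriv (fn (n+1)) = fun x => x * fn n x := by
  funext x
  have hc : Continuous (fun t : ℝ => t * fn n t) :=
    continuous_id.mul (fn_contDiff n).continuous
  exact hc.deriv_integral _ 0 x

lemma fn_zero_eq (n : ℕ) : fn n 0 = 0 := by
  cases n with
  | zero => simp [fn]
  | succ n => simp [fn]

lemma fn_diff (n : ℕ) : Differentiable ℝ (fn n) := (fn_contDiff n).differentiable (by simp)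

lemma deriv_fn_contDiff (n : ℕ) : ContDiff ℝ ((⊤:ℕ∞):WithTop ℕ∞) (deriv (fn n)) :=
  (contDiff_infty_iff_deriv.1 (fn_contDiff n)).2

lemma deriv_fn_diff (n : ℕ) : Differentiable ℝ (deriv (fn n)) :=
  (deriv_fn_contDiff n).differentiable (by simp)

lemma deriv2_fn_diff (n : ℕ) : Differentiable ℝ (deriv (deriv (fn n))) :=
  ((contDiff_infty_iff_deriv.1 (deriv_fn_contDiff n)).2).differentiable (by simp)

/-- The ODE `x f'' = 2n f' - x f`. -/
lemma fn_ode (n : ℕ) : ∀ x : ℝ,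
    x * deriv (deriv (fn n)) x = 2 * n * deriv (fn n) x - x * fn n x := by
  induction n with
  | zero =>
    intro x
    have h0 : fn 0 = Real.sin := rfl
    rw [h0, Real.deriv_sin, Real.deriv_cos']
    push_cast; ring
  | succ n ih =>
    have hid : ∀ x : ℝ, fn (n+1) x = (2*n+1) * fn n x - x * deriv (fn n) x := by
      set F : ℝ → ℝ := fun x => fn (n+1) x - ((2*(n:ℝ)+1) * fn n x - x * deriv (fn n) x)
        with hF
      have hdF : ∀ x, HasDerivAt F 0 x := by
        intro x
        have h1 : HasDerivAt (fn (n+1)) (x * fn n x) x := by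
          have := (fn_diff (n+1) x).hasDerivAt
          rwa [fn_deriv n] at this
        have h2 : HasDerivAt (fun x : ℝ => (2*(n:ℝ)+1) * fn n x)
            ((2*(n:ℝ)+1) * deriv (fn n) x) x :=
          ((fn_diff n x).hasDerivAt).const_mul _
        have h3 : HasDerivAt (fun x : ℝ => x * deriv (fn n) x)
            (deriv (fn n) x + x * deriv (deriv (fn n)) x) x := by
          have := (hasDerivAt_id x).mul ((deriv_fn_diff n x).hasDerivAt)
          simpa [add_comm, Pi.mul_def, Pi.sub_def] using this
        have h4 := h1.sub (h2.sub h3)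
        have he : x * fn n x - ((2*(n:ℝ)+1) * deriv (fn n) x -
            (deriv (fn n) x + x * deriv (deriv (fn n)) x)) = 0 := by
          have := ih x
          nlinarith [this]
        rwa [he] at h4
      have hconst : ∀ x : ℝ, F x = F 0 := by
        intro x
        exact is_const_of_deriv_eq_zero (fun y => (hdF y).differentiableAt)
          (fun y => (hdF y).deriv) x 0
      intro x
      have hx := hconst x
      have h0 : F 0 = 0 := by
        simp [hF, fn_zero_eq]
      rw [h0] at hx
      have : fn (n+1) x - ((2*(n:ℝ)+1) * fn n x - x * deriv (fn n) x) = 0 := hx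
      linarith [this]
    intro x
    have hd1 : deriv (fn (n+1)) = fun x => x * fn n x := fn_deriv n
    have hd2 : deriv (deriv (fn (n+1))) x = fn n x + x * deriv (fn n) x := by
      rw [hd1]
      have : HasDerivAt (fun x : ℝ => x * fn n x) (fn n x + x * deriv (fn n) x) x := by
        have := (hasDerivAt_id x).mul ((fn_diff n x).hasDerivAt)
        simpa [add_comm, Pi.mul_def, Pi.sub_def] using this
      exact this.deriv
    rw [hd2, hd1, hid x]
    push_cast
    ring

lemma fn_pos (n : ℕ) : ∀ x, 0 < x → x < Real.pi → 0 < fn n x := by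
  induction n with
  | zero => exact fun x hx hx' => Real.sin_pos_of_pos_of_lt_pi hx hx'
  | succ n ih =>
    intro x hx hx'
    have hc : Continuous (fun t : ℝ => t * fn n t) :=
      continuous_id.mul (fn_contDiff n).continuous
    have : (0:ℝ) < ∫ t in (0:ℝ)..x, t * fn n t := by
      apply intervalIntegral.intervalIntegral_pos_of_pos_on
        (hc.intervalIntegrable 0 x)
      · intro t ht
        exact mul_pos ht.1 (ih t ht.1 (ht.2.trans hx'))
      · exact hx
    simpa [fn] using this

lemma fn_bound (n : ℕ) : ∀ x ∈ Set.Icc (0:ℝ) 1, |fn n x| ≤ x ^ (2*n+1) := by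
  induction n with
  | zero =>
    intro x hx
    simpa [fn, abs_of_nonneg hx.1] using Real.abs_sin_le_abs (x := x)
  | succ n ih =>
    intro x hx
    have hc : Continuous (fun t : ℝ => t * fn n t) :=
      continuous_id.mul (fn_contDiff n).continuous
    have h1 : |∫ t in (0:ℝ)..x, t * fn n t| ≤ ∫ t in (0:ℝ)..x, |t * fn n t| :=
      intervalIntegral.abs_integral_le_integral_abs hx.1
    have h2 : (∫ t in (0:ℝ)..x, |t * fn n t|) ≤ ∫ t in (0:ℝ)..x, t ^ (2*n+2) := by
      apply intervalIntegral.integral_mono_on hx.1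
        (hc.abs.intervalIntegrable 0 x)
        ((continuous_pow _).intervalIntegrable 0 x)
      intro t ht
      have ht1 : t ∈ Set.Icc (0:ℝ) 1 := ⟨ht.1, ht.2.trans hx.2⟩
      have := ih t ht1
      calc |t * fn n t| = t * |fn n t| := by
            rw [abs_mul, abs_of_nonneg ht.1]
        _ ≤ t * t ^ (2*n+1) := by
            exact mul_le_mul_of_nonneg_left this ht.1
        _ = t ^ (2*n+2) := by ring
    have h3 : (∫ t in (0:ℝ)..x, t ^ (2*n+2)) ≤ x ^ (2*(n+1)+1) := by
      rw [integral_pow]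
      have hxp : (0:ℝ) ≤ x ^ (2*n+2+1) := pow_nonneg hx.1 _
      have : x ^ (2*n+2+1) / ((2*n+2:ℕ)+1) ≤ x ^ (2*n+2+1) := by
        apply div_le_self hxp
        push_cast; linarith
      simpa [show 2*(n+1)+1 = 2*n+2+1 by ring] using this
    have : |fn (n+1) x| = |∫ t in (0:ℝ)..x, t * fn n t| := by simp [fn]
    rw [this]
    exact h1.trans (h2.trans h3)

lemma deriv_fn_bound (n : ℕ) : ∀ x ∈ Set.Icc (0:ℝ) 1, |deriv (fn n) x| ≤ x ^ (2*n) := by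
  cases n with
  | zero =>
    intro x hx
    have h0 : fn 0 = Real.sin := rfl
    rw [h0, Real.deriv_sin]
    simpa using Real.abs_cos_le_one x
  | succ n =>
    intro x hx
    rw [fn_deriv n]
    calc |x * fn n x| = x * |fn n x| := by rw [abs_mul, abs_of_nonneg hx.1]
      _ ≤ x * x ^ (2*n+1) := mul_le_mul_of_nonneg_left (fn_bound n x hx) hx.1
      _ = x ^ (2*(n+1)) := by ring

lemma contDiff_deriv' {g : ℝ → ℝ} (h : ContDiff ℝ ((⊤:ℕ∞):WithTop ℕ∞) g) :
    ContDiff ℝ ((⊤:ℕ∞):WithTop ℕ∞) (deriv g) := (contDiff_infty_iff_deriv.1 h).2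

lemma contDiff_diff {g : ℝ → ℝ} (h : ContDiff ℝ ((⊤:ℕ∞):WithTop ℕ∞) g) :
    Differentiable ℝ g := h.differentiable (by simp)

lemma fn_ode2 (n : ℕ) : ∀ x : ℝ,
    x * deriv (deriv (deriv (fn n))) x =
      (2*(n:ℝ)-1) * deriv (deriv (fn n)) x - fn n x - x * deriv (fn n) x := by
  intro x
  have heq : (fun x : ℝ => x * deriv (deriv (fn n)) x)
      = (fun x : ℝ => 2*(n:ℝ) * deriv (fn n) x - x * fn n x) := funext (fn_ode n)
  have hD2 : Differentiable ℝ (deriv (deriv (fn n))) :=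
    contDiff_diff (contDiff_deriv' (deriv_fn_contDiff n))
  have h1 : HasDerivAt (fun x : ℝ => x * deriv (deriv (fn n)) x)
      (deriv (deriv (fn n)) x + x * deriv (deriv (deriv (fn n))) x) x := by
    simpa [add_comm, Pi.mul_def, Pi.sub_def] using (hasDerivAt_id x).mul ((hD2 x).hasDerivAt)
  have h2 : HasDerivAt (fun x : ℝ => 2*(n:ℝ) * deriv (fn n) x - x * fn n x)
      (2*(n:ℝ) * deriv (deriv (fn n)) x - (fn n x + x * deriv (fn n) x)) x := by
    have ha := ((deriv_fn_diff n x).hasDerivAt).const_mul (2*(n:ℝ))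
    have hb := (hasDerivAt_id x).mul ((fn_diff n x).hasDerivAt)
    have := ha.sub hb
    simpa [add_comm, Pi.mul_def, Pi.sub_def] using this
  have e1 := h1.deriv
  rw [heq, h2.deriv] at e1
  linarith [e1]

lemma fn_ode3 (n : ℕ) : ∀ x : ℝ,
    x * deriv (deriv (deriv (deriv (fn n)))) x =
      (2*(n:ℝ)-2) * deriv (deriv (deriv (fn n))) x - 2 * deriv (fn n) x
        - x * deriv (deriv (fn n)) x := by
  intro x
  have heq : (fun x : ℝ => x * deriv (deriv (deriv (fn n))) x)
      = (fun x : ℝ => (2*(n:ℝ)-1) * deriv (deriv (fn n)) x - fn n x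
          - x * deriv (fn n) x) := funext (fn_ode2 n)
  have hD2 : Differentiable ℝ (deriv (deriv (fn n))) :=
    contDiff_diff (contDiff_deriv' (deriv_fn_contDiff n))
  have hD3 : Differentiable ℝ (deriv (deriv (deriv (fn n)))) :=
    contDiff_diff (contDiff_deriv' (contDiff_deriv' (deriv_fn_contDiff n)))
  have h1 : HasDerivAt (fun x : ℝ => x * deriv (deriv (deriv (fn n))) x)
      (deriv (deriv (deriv (fn n))) x + x * deriv (deriv (deriv (deriv (fn n)))) x) x := by
    simpa [add_comm, Pi.mul_def, Pi.sub_def] using (hasDerivAt_id x).mul ((hD3 x).hasDerivAt)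
  have h2 : HasDerivAt (fun x : ℝ => (2*(n:ℝ)-1) * deriv (deriv (fn n)) x - fn n x
        - x * deriv (fn n) x)
      ((2*(n:ℝ)-1) * deriv (deriv (deriv (fn n))) x - deriv (fn n) x
        - (deriv (fn n) x + x * deriv (deriv (fn n)) x)) x := by
    have ha := ((hD2 x).hasDerivAt).const_mul (2*(n:ℝ)-1)
    have hb := (fn_diff n x).hasDerivAt
    have hc := (hasDerivAt_id x).mul ((deriv_fn_diff n x).hasDerivAt)
    have := (ha.sub hb).sub hc
    simp only [id_eq, one_mul, Pi.mul_def, Pi.sub_def] at this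
    convert this using 1
  have e1 := h1.deriv
  rw [heq, h2.deriv] at e1
  linarith [e1]

lemma iterate_two (g : ℝ → ℝ) : deriv^[2] g = deriv (deriv g) := by
  rw [Function.iterate_succ_apply', Function.iterate_one]

lemma v_fn_eq (n : ℕ) : v (fn n)
    = fun x => (deriv (fn n) x)^2 - deriv (deriv (fn n)) x * fn n x := by
  funext x; rw [v, iterate_two]

lemma v_hasDeriv (n : ℕ) (x : ℝ) : HasDerivAt (v (fn n))
    (deriv (fn n) x * deriv (deriv (fn n)) x
      - deriv (deriv (deriv (fn n))) x * fn n x) x := by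
  rw [v_fn_eq]
  have hD2 : Differentiable ℝ (deriv (deriv (fn n))) :=
    contDiff_diff (contDiff_deriv' (deriv_fn_contDiff n))
  have h1 : HasDerivAt (fun x => (deriv (fn n) x)^2)
      (2 * deriv (fn n) x ^ 1 * deriv (deriv (fn n)) x) x :=
    ((deriv_fn_diff n x).hasDerivAt).pow 2
  have h2 : HasDerivAt (fun x => deriv (deriv (fn n)) x * fn n x)
      (deriv (deriv (deriv (fn n))) x * fn n x
        + deriv (deriv (fn n)) x * deriv (fn n) x) x :=
    ((hD2 x).hasDerivAt).mul ((fn_diff n x).hasDerivAt)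
  have := h1.sub h2
  refine this.congr_deriv ?_
  ring

lemma deriv_v_eq (n : ℕ) : deriv (v (fn n))
    = fun x => deriv (fn n) x * deriv (deriv (fn n)) x
      - deriv (deriv (deriv (fn n))) x * fn n x :=
  funext fun x => (v_hasDeriv n x).deriv

lemma deriv_v_hasDeriv (n : ℕ) (x : ℝ) : HasDerivAt (deriv (v (fn n)))
    ((deriv (deriv (fn n)) x)^2
      - deriv (deriv (deriv (deriv (fn n)))) x * fn n x) x := by
  rw [deriv_v_eq]
  have hD2 : Differentiable ℝ (deriv (deriv (fn n))) :=
    contDiff_diff (contDiff_deriv' (deriv_fn_contDiff n))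
  have hD3 : Differentiable ℝ (deriv (deriv (deriv (fn n)))) :=
    contDiff_diff (contDiff_deriv' (contDiff_deriv' (deriv_fn_contDiff n)))
  have h1 : HasDerivAt (fun x => deriv (fn n) x * deriv (deriv (fn n)) x)
      (deriv (deriv (fn n)) x * deriv (deriv (fn n)) x
        + deriv (fn n) x * deriv (deriv (deriv (fn n))) x) x :=
    ((deriv_fn_diff n x).hasDerivAt).mul ((hD2 x).hasDerivAt)
  have h2 : HasDerivAt (fun x => deriv (deriv (deriv (fn n))) x * fn n x)
      (deriv (deriv (deriv (deriv (fn n)))) x * fn n x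
        + deriv (deriv (deriv (fn n))) x * deriv (fn n) x) x :=
    ((hD3 x).hasDerivAt).mul ((fn_diff n x).hasDerivAt)
  have := h1.sub h2
  refine this.congr_deriv ?_
  ring

lemma deriv2_v_eq (n : ℕ) : deriv (deriv (v (fn n)))
    = fun x => (deriv (deriv (fn n)) x)^2
      - deriv (deriv (deriv (deriv (fn n)))) x * fn n x :=
  funext fun x => (deriv_v_hasDeriv n x).deriv

lemma xderiv_v (n : ℕ) (x : ℝ) : x * deriv (v (fn n)) x
    = ((fn n x)^2 + (deriv (fn n) x)^2) + (2*(n:ℝ)-1) * v (fn n) x := by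
  rw [deriv_v_eq, v_fn_eq]
  have e1 := fn_ode n x
  have e2 := fn_ode2 n x
  simp only
  linear_combination (deriv (fn n) x) * e1 - (fn n x) * e2

lemma x2deriv2_v (n : ℕ) (x : ℝ) : x^2 * deriv (deriv (v (fn n))) x
    = 2*((3*(n:ℝ)-1)*(deriv (fn n) x)^2 + ((n:ℝ)-1)*(fn n x)^2
        + ((n:ℝ)-1)*(2*(n:ℝ)-1) * v (fn n) x) := by
  rw [deriv2_v_eq, v_fn_eq]
  have e1 := fn_ode n x
  have e2 := fn_ode2 n x
  have e3 := fn_ode3 n x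
  simp only
  linear_combination (x * deriv (deriv (fn n)) x + 2*(n:ℝ)*deriv (fn n) x) * e1
    - x * (fn n x) * e3 - (2*(n:ℝ)-2) * (fn n x) * e2

lemma deriv2_fn_bound (m : ℕ) : ∀ x ∈ Set.Icc (0:ℝ) 1,
    |deriv (deriv (fn (m+1))) x| ≤ 2 * x ^ (2*m+1) := by
  intro x hx
  have h : deriv (deriv (fn (m+1))) x = fn m x + x * deriv (fn m) x := by
    rw [fn_deriv m]
    have : HasDerivAt (fun x : ℝ => x * fn m x) (fn m x + x * deriv (fn m) x) x := by
      simpa [add_comm, Pi.mul_def, Pi.sub_def] using (hasDerivAt_id x).mul ((fn_diff m x).hasDerivAt)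
    exact this.deriv
  rw [h]
  calc |fn m x + x * deriv (fn m) x| ≤ |fn m x| + |x * deriv (fn m) x| := abs_add_le _ _
    _ ≤ x^(2*m+1) + x * x^(2*m) := by
        gcongr
        · exact fn_bound m x hx
        · rw [abs_mul, abs_of_nonneg hx.1]
          exact mul_le_mul_of_nonneg_left (deriv_fn_bound m x hx) hx.1
    _ = 2 * x ^ (2*m+1) := by ring

lemma v_bound (m : ℕ) : ∀ x ∈ Set.Icc (0:ℝ) 1,
    |v (fn (m+1)) x| ≤ 3 * x ^ (4*(m+1)) := by
  intro x hx
  rw [v_fn_eq]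
  simp only
  calc |(deriv (fn (m+1)) x)^2 - deriv (deriv (fn (m+1))) x * fn (m+1) x|
      ≤ |(deriv (fn (m+1)) x)^2| + |deriv (deriv (fn (m+1))) x * fn (m+1) x| :=
        abs_sub _ _
    _ ≤ (x^(2*(m+1)))^2 + (2*x^(2*m+1)) * x^(2*(m+1)+1) := by
        rw [abs_mul, abs_pow]
        gcongr ?_^2 + ?_*?_
        · exact deriv_fn_bound (m+1) x hx
        · exact mul_nonneg (by norm_num) (pow_nonneg hx.1 _)
        · exact deriv2_fn_bound m x hx
        · exact fn_bound (m+1) x hx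
    _ = 3 * x ^ (4*(m+1)) := by ring

lemma M_pos (n : ℕ) {x : ℝ} (hx : 0 < x) :
    0 < (fn n x)^2 + (deriv (fn n) x)^2 := by
  set M : ℝ → ℝ := fun x => (fn n x)^2 + (deriv (fn n) x)^2 with hM
  have hD2 : Differentiable ℝ (deriv (deriv (fn n))) :=
    contDiff_diff (contDiff_deriv' (deriv_fn_contDiff n))
  have hMd : ∀ y : ℝ, HasDerivAt M
      (2 * fn n y * deriv (fn n) y + 2 * deriv (fn n) y * deriv (deriv (fn n)) y) y := by
    intro y
    have h1 := ((fn_diff n y).hasDerivAt).pow 2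
    have h2 := ((deriv_fn_diff n y).hasDerivAt).pow 2
    have := h1.add h2
    refine this.congr_deriv ?_
    ring
  have hmono : MonotoneOn M (Set.Ioi 0) := by
    apply monotoneOn_of_deriv_nonneg (convex_Ioi 0)
      (Continuous.continuousOn (by
        have := (fn_contDiff n).continuous
        have := (deriv_fn_contDiff n).continuous
        fun_prop))
      (fun y hy => ((hMd y).differentiableAt).differentiableWithinAt)
    intro y hy
    rw [interior_Ioi] at hy
    rw [(hMd y).deriv]
    have e1 := fn_ode n y
    have key : (2 * fn n y * deriv (fn n) y
        + 2 * deriv (fn n) y * deriv (deriv (fn n)) y) * y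
        = 4 * n * (deriv (fn n) y)^2 := by
      linear_combination 2 * (deriv (fn n) y) * e1
    have h4 : (0:ℝ) ≤ 4 * n * (deriv (fn n) y)^2 := by positivity
    rw [← key] at h4
    exact nonneg_of_mul_nonneg_right (by linarith [h4]) hy
  have hy1 : (0:ℝ) < min x 1 := lt_min hx one_pos
  have hyπ : min x 1 < Real.pi := lt_of_le_of_lt (min_le_right _ _)
    (by linarith [Real.pi_gt_three])
  have hfy : 0 < fn n (min x 1) := fn_pos n _ hy1 hyπ
  have hMy : 0 < M (min x 1) := by
    have : 0 < (fn n (min x 1))^2 := pow_pos hfy 2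
    have h2 : (0:ℝ) ≤ (deriv (fn n) (min x 1))^2 := sq_nonneg _
    simp only [hM]; nlinarith
  have := hmono (Set.mem_Ioi.2 hy1) (Set.mem_Ioi.2 hx) (min_le_left x 1)
  calc (0:ℝ) < M (min x 1) := hMy
    _ ≤ M x := this

lemma v_cont (n : ℕ) : Continuous (v (fn n)) := by
  have : Differentiable ℝ (v (fn n)) := fun x => (v_hasDeriv n x).differentiableAt
  exact this.continuous

lemma v_hasDeriv' (n : ℕ) (x : ℝ) : HasDerivAt (v (fn n)) (deriv (v (fn n)) x) x :=
  ((v_hasDeriv n x).differentiableAt).hasDerivAt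

lemma deriv_v_hasDeriv' (n : ℕ) (x : ℝ) :
    HasDerivAt (deriv (v (fn n))) (deriv (deriv (v (fn n))) x) x :=
  ((deriv_v_hasDeriv n x).differentiableAt).hasDerivAt

lemma v_pos (m : ℕ) : ∀ x : ℝ, 0 < x → 0 < v (fn (m+1)) x := by
  set n : ℕ := m + 1 with hn
  set w : ℝ → ℝ := fun x => v (fn n) x / x^(2*m+1) with hw
  -- derivative of w is positive on Ioi 0
  have hwd : ∀ x : ℝ, 0 < x → HasDerivAt w
      ((deriv (v (fn n)) x * x^(2*m+1) - v (fn n) x * ((2*(m:ℝ)+1) * x^(2*m)))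
        / (x^(2*m+1))^2) x := by
    intro x hx
    have hp : HasDerivAt (fun y : ℝ => y^(2*m+1)) ((2*(m:ℝ)+1) * x^(2*m)) x := by
      have h : ((2*m+1 : ℕ):ℝ) * x^(2*m+1-1) = (2*(m:ℝ)+1) * x^(2*m) := by
        push_cast [Nat.add_sub_cancel]; ring
      rw [← h]
      exact hasDerivAt_pow _ x
    exact (v_hasDeriv' n x).div hp (pow_ne_zero _ (ne_of_gt hx))
  have hnum : ∀ x : ℝ, 0 < x →
      deriv (v (fn n)) x * x^(2*m+1) - v (fn n) x * ((2*(m:ℝ)+1) * x^(2*m))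
        = x^(2*m) * ((fn n x)^2 + (deriv (fn n) x)^2) := by
    intro x hx
    have e := xderiv_v n x
    push_cast [hn] at e ⊢
    apply mul_right_cancel₀ (ne_of_gt hx)
    rw [pow_succ]
    linear_combination (x^(2*m) * x) * e
  have hwc : ContinuousOn w (Set.Ioi 0) := by
    apply ContinuousOn.div (v_cont n).continuousOn (continuous_pow _).continuousOn
    exact fun x hx => pow_ne_zero _ (ne_of_gt (Set.mem_Ioi.1 hx))
  have hwmono : StrictMonoOn w (Set.Ioi 0) := by
    apply strictMonoOn_of_deriv_pos (convex_Ioi 0) hwc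
    intro x hx
    rw [interior_Ioi] at hx
    have hx' : (0:ℝ) < x := hx
    rw [(hwd x hx').deriv, hnum x hx']
    apply div_pos
    · exact mul_pos (pow_pos hx' _) (M_pos n hx')
    · exact pow_pos (pow_pos hx' _) 2
  -- w tends to 0 at 0⁺
  have htend : Filter.Tendsto w (nhdsWithin 0 (Set.Ioi 0)) (nhds 0) := by
    have hb : ∀ y ∈ Set.Ioo (0:ℝ) 1, |w y| ≤ 3 * y^(2*m+3) := by
      intro y hy
      have h1 : |v (fn n) y| ≤ 3 * y^(4*(m+1)) := v_bound m y ⟨hy.1.le, hy.2.le⟩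
      have hyk : (0:ℝ) < y^(2*m+1) := pow_pos hy.1 _
      rw [hw]
      simp only [abs_div, abs_of_pos hyk]
      rw [div_le_iff₀ hyk]
      calc |v (fn n) y| ≤ 3 * y^(4*(m+1)) := h1
        _ = 3 * y^(2*m+3) * y^(2*m+1) := by rw [mul_assoc, ← pow_add]; norm_num; ring_nf
    have hup : Filter.Tendsto (fun y : ℝ => 3 * y^(2*m+3)) (nhdsWithin 0 (Set.Ioi 0)) (nhds 0) := by
      apply Filter.Tendsto.mono_left ?_ nhdsWithin_le_nhds
      have : Filter.Tendsto (fun y : ℝ => 3 * y^(2*m+3)) (nhds 0) (nhds (3 * (0:ℝ)^(2*m+3))) :=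
        (Continuous.tendsto (by continuity) 0)
      simpa using this
    have hlo : Filter.Tendsto (fun y : ℝ => -(3 * y^(2*m+3))) (nhdsWithin 0 (Set.Ioi 0)) (nhds 0) := by
      simpa using hup.neg
    apply tendsto_of_tendsto_of_tendsto_of_le_of_le' hlo hup
    · filter_upwards [Ioo_mem_nhdsGT_of_mem (Set.mem_Ico.2 ⟨le_refl (0:ℝ), one_pos⟩)] with y hy
      exact neg_le_of_abs_le (hb y hy)
    · filter_upwards [Ioo_mem_nhdsGT_of_mem (Set.mem_Ico.2 ⟨le_refl (0:ℝ), one_pos⟩)] with y hy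
      exact le_of_abs_le (hb y hy)
  have hwnn : ∀ x : ℝ, 0 < x → 0 ≤ w x := by
    intro x hx
    apply le_of_tendsto htend
    filter_upwards [Ioo_mem_nhdsGT_of_mem (Set.mem_Ico.2 ⟨le_refl (0:ℝ), hx⟩)] with y hy
    exact (hwmono (Set.mem_Ioi.2 hy.1) (Set.mem_Ioi.2 hx) hy.2).le
  intro x hx
  have h1 : 0 ≤ w (x/2) := hwnn _ (by linarith)
  have h2 : w (x/2) < w x :=
    hwmono (Set.mem_Ioi.2 (by linarith)) (Set.mem_Ioi.2 hx) (by linarith)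
  have hwx : 0 < w x := lt_of_le_of_lt h1 h2
  have : v (fn n) x = w x * x^(2*m+1) := by
    rw [hw]; field_simp
  rw [this]
  exact mul_pos hwx (pow_pos hx _)

lemma nonneg_of_mul_aux {a b : ℝ} (h : 0 ≤ b * a) (hb : 0 < b) : 0 ≤ a := by
  rw [← mul_div_cancel_left₀ a (ne_of_gt hb)]
  exact div_nonneg h hb.le

lemma pos_of_mul_aux {a b : ℝ} (h : 0 < b * a) (hb : 0 < b) : 0 < a := by
  rw [← mul_div_cancel_left₀ a (ne_of_gt hb)]
  exact div_pos h hb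

theorem stmt_8 (n : ℕ) (hn : 1 ≤ n) :
    (∀ x > (0 : ℝ), 0 < v (fn n) x) ∧ MonotoneOn (v (fn n)) (Set.Ioi 0) ∧
    (∀ x > (0 : ℝ), 0 < deriv (v (fn n)) x) ∧ MonotoneOn (deriv (v (fn n))) (Set.Ioi 0) ∧
    (∀ x > (0 : ℝ), 0 ≤ deriv^[2] (v (fn n)) x) := by
  obtain ⟨m, rfl⟩ : ∃ m, n = m + 1 := ⟨n - 1, (Nat.succ_pred_eq_of_pos hn).symm⟩
  set n : ℕ := m + 1 with hn'
  have hv : ∀ x > (0:ℝ), 0 < v (fn n) x := fun x hx => v_pos m x hx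
  have hdvpos : ∀ x > (0:ℝ), 0 < deriv (v (fn n)) x := by
    intro x hx
    have e := xderiv_v n x
    have hvx := hv x hx
    have hMx := M_pos n hx
    have hco : (0:ℝ) < 2*(n:ℝ) - 1 := by push_cast [hn']; linarith
    have h2 : 0 < x * deriv (v (fn n)) x := by
      rw [e]; nlinarith
    exact pos_of_mul_aux h2 hx
  have hdd : ∀ x > (0:ℝ), 0 ≤ deriv (deriv (v (fn n))) x := by
    intro x hx
    have e := x2deriv2_v n x
    have hvx := (hv x hx).le
    have hc1 : (0:ℝ) ≤ 3*(n:ℝ) - 1 := by push_cast [hn']; linarith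
    have hc2 : (0:ℝ) ≤ (n:ℝ) - 1 := by push_cast [hn']; linarith
    have hc3 : (0:ℝ) ≤ 2*(n:ℝ) - 1 := by push_cast [hn']; linarith
    have h2 : 0 ≤ x^2 * deriv (deriv (v (fn n))) x := by
      rw [e]
      have hs1 := sq_nonneg (deriv (fn n) x)
      have hs2 := sq_nonneg (fn n x)
      nlinarith [mul_nonneg hc1 hs1, mul_nonneg hc2 hs2, mul_nonneg (mul_nonneg hc2 hc3) hvx]
    exact nonneg_of_mul_aux h2 (pow_pos hx 2)
  have hdiffv : ∀ y : ℝ, DifferentiableAt ℝ (v (fn n)) y :=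
    fun y => (v_hasDeriv n y).differentiableAt
  have hdiffdv : ∀ y : ℝ, DifferentiableAt ℝ (deriv (v (fn n))) y :=
    fun y => (deriv_v_hasDeriv n y).differentiableAt
  refine ⟨hv, ?_, hdvpos, ?_, ?_⟩
  · apply monotoneOn_of_deriv_nonneg (convex_Ioi 0) (v_cont n).continuousOn
      (fun y hy => (hdiffv y).differentiableWithinAt)
    intro y hy
    rw [interior_Ioi] at hy
    exact (hdvpos y hy).le
  · apply monotoneOn_of_deriv_nonneg (convex_Ioi 0)
      (Differentiable.continuous hdiffdv).continuousOn
      (fun y hy => (hdiffdv y).differentiableWithinAt)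
    intro y hy
    rw [interior_Ioi] at hy
    exact hdd y hy
  · intro x hx
    rw [iterate_two]
    exact hdd x hx
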